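/- For every nonnegative integer n, Σ_{j=0}^{n} (q;q²)_j q^{-(n+1)(2j+1)} / (q²;q²)_j = (q;q²)_{n+1}/(q²;q²)_{n+1} · Σ_{j=-n-1}^{n} q^{-j(2j+1)}, as an identity of rational functions in q. -/

import Mathlib

/-- Finite q-Pochhammer symbol `(a;q)_n`. -/
noncomputable def qp (a q : ℂ) (n : ℕ) : ℂ := ∏ k ∈ Finset.range n, (1 - a * q ^ k)

lemma qp_succ (a Q : ℂ) (m : ℕ) : qp a Q (m+1) = qp a Q m * (1 - a * Q ^ m) :=
  Finset.prod_range_succ _ _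

lemma hqp1 (q : ℂ) (h1 : ∀ m : ℕ, (1:ℂ) - q^(m+1) ≠ 0) (m : ℕ) : qp q (q^2) m ≠ 0 := by
  unfold qp
  rw [Finset.prod_ne_zero_iff]
  intro k _
  have h : q * (q^2)^k = q^(2*k+1) := by ring
  rw [h]
  exact h1 (2*k)

lemma hqp2 (q : ℂ) (h1 : ∀ m : ℕ, (1:ℂ) - q^(m+1) ≠ 0) (m : ℕ) : qp (q^2) (q^2) m ≠ 0 := by
  unfold qp
  rw [Finset.prod_ne_zero_iff]
  intro k _
  have h : q^2 * (q^2)^k = q^(2*k+1+1) := by ring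
  rw [h]
  exact h1 (2*k+1)

noncomputable def bb (q : ℂ) (n j : ℕ) : ℂ :=
  qp q (q^2) j * qp (q^2) (q^2) (n+1) /
    (q ^ ((n+1)*(2*j+1)) * (qp (q^2) (q^2) j * qp q (q^2) (n+1)))

noncomputable def gg (q : ℂ) (n j : ℕ) : ℂ :=
  bb q n j * q ^ (2*n+2) * (1 - q ^ (2*j)) / (1 - q ^ (2*n+2))

lemma cert (q : ℂ) (hq0 : q ≠ 0) (h1 : ∀ m : ℕ, (1:ℂ) - q^(m+1) ≠ 0) (n j : ℕ) :
    bb q (n+1) j - bb q n j = gg q (n+1) (j+1) - gg q (n+1) j := by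
  have hA := hqp1 q h1 j
  have hB := hqp2 q h1 j
  have hC := hqp1 q h1 (n+1)
  have hD := hqp2 q h1 (n+1)
  have hu : q^(2*j) ≠ 0 := pow_ne_zero _ hq0
  have hv : q^(2*n) ≠ 0 := pow_ne_zero _ hq0
  have hX : q^((n+1)*(2*j+1)) ≠ 0 := pow_ne_zero _ hq0
  have e2 : (1:ℂ) - q^2 * q^(2*j) ≠ 0 := by
    have h : q^2 * q^(2*j) = q^(2*j+1+1) := by ring
    rw [h]; exact h1 (2*j+1)
  have e3 : (1:ℂ) - q^3 * q^(2*n) ≠ 0 := by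
    have h : q^3 * q^(2*n) = q^(2*n+2+1) := by ring
    rw [h]; exact h1 (2*n+2)
  have e4 : (1:ℂ) - q^4 * q^(2*n) ≠ 0 := by
    have h : q^4 * q^(2*n) = q^(2*n+3+1) := by ring
    rw [h]; exact h1 (2*n+3)
  have e4' : (1:ℂ) - q^(2*(n+1)+2) ≠ 0 := by
    have h : (2*(n+1)+2) = 2*n+3+1 := by ring
    rw [h]; exact h1 (2*n+3)
  have r1 : qp (q^2) (q^2) (n+1+1) = qp (q^2) (q^2) (n+1) * (1 - q^4 * q^(2*n)) := by
    rw [qp_succ]; ring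
  have r2 : qp q (q^2) (n+1+1) = qp q (q^2) (n+1) * (1 - q^3 * q^(2*n)) := by
    rw [qp_succ]; ring
  have r3 : qp q (q^2) (j+1) = qp q (q^2) j * (1 - q * q^(2*j)) := by
    rw [qp_succ]; ring
  have r4 : qp (q^2) (q^2) (j+1) = qp (q^2) (q^2) j * (1 - q^2 * q^(2*j)) := by
    rw [qp_succ]; ring
  have r5 : q^((n+1+1)*(2*j+1)) = q^((n+1)*(2*j+1)) * (q^(2*j) * q) := by
    rw [show (n+1+1)*(2*j+1) = (n+1)*(2*j+1) + (2*j + 1) from by ring, pow_add, pow_add,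
      pow_one]
  have r6 : q^((n+1+1)*(2*(j+1)+1))
      = q^((n+1)*(2*j+1)) * (q^(2*j) * q) * (q^(2*n) * q^4) := by
    rw [show (n+1+1)*(2*(j+1)+1) = ((n+1)*(2*j+1) + (2*j + 1)) + (2*n + 4) from by ring,
      pow_add, pow_add, pow_add, pow_one, pow_add]
  have r7 : q^(2*(n+1)+2) = q^(2*n) * q^4 := by
    rw [show 2*(n+1)+2 = 2*n + 4 from by ring, pow_add]
  have r8 : q^(2*(j+1)) = q^(2*j) * q^2 := by
    rw [show 2*(j+1) = 2*j + 2 from by ring, pow_add]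
  set A := qp q (q^2) j with hAdef
  set B := qp (q^2) (q^2) j with hBdef
  set C := qp q (q^2) (n+1) with hCdef
  set D := qp (q^2) (q^2) (n+1) with hDdef
  set X := q^((n+1)*(2*j+1)) with hXdef
  set u := q^(2*j) with hudef
  set v := q^(2*n) with hvdef
  clear_value A B C D X u v
  rw [r7] at e4'
  set Δ := X*(u*q)*(v*q^4)*(B*(1-q^2*u))*(C*(1-q^3*v))*(1-v*q^4) with hΔdef
  have hq4 : (q:ℂ)^4 ≠ 0 := pow_ne_zero 4 hq0
  have hΔ : Δ ≠ 0 := by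
    rw [hΔdef]
    exact mul_ne_zero (mul_ne_zero (mul_ne_zero (mul_ne_zero (mul_ne_zero hX
      (mul_ne_zero hu hq0)) (mul_ne_zero hv hq4)) (mul_ne_zero hB e2))
      (mul_ne_zero hC e3)) e4'
  have den1 : X*(u*q)*(B*(C*(1-q^3*v))) ≠ 0 :=
    mul_ne_zero (mul_ne_zero hX (mul_ne_zero hu hq0))
      (mul_ne_zero hB (mul_ne_zero hC e3))
  have den2 : X*(B*C) ≠ 0 := mul_ne_zero hX (mul_ne_zero hB hC)
  have den3 : X*(u*q)*(v*q^4)*(B*(1-q^2*u)*(C*(1-q^3*v))) ≠ 0 :=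
    mul_ne_zero (mul_ne_zero (mul_ne_zero hX (mul_ne_zero hu hq0))
      (mul_ne_zero hv hq4))
      (mul_ne_zero (mul_ne_zero hB e2) (mul_ne_zero hC e3))
  have t1 : bb q (n+1) j
      = (A*(D*(1-q^4*v)) * ((v*q^4)*((1-q^2*u)*(1-v*q^4)))) / Δ := by
    simp only [bb, r1, r2, r5, ← hAdef, ← hBdef]
    rw [div_eq_div_iff den1 hΔ, hΔdef]
    ring
  have t2 : bb q n j
      = (A*D*((u*q)*((v*q^4)*((1-q^2*u)*((1-q^3*v)*(1-v*q^4)))))) / Δ := by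
    simp only [bb, ← hAdef, ← hBdef, ← hCdef, ← hDdef, ← hXdef]
    rw [div_eq_div_iff den2 hΔ, hΔdef]
    ring
  have t3 : gg q (n+1) (j+1)
      = ((A*(1-q*u))*(D*(1-q^4*v))*((v*q^4)*(1-u*q^2))) / Δ := by
    simp only [gg, bb, r1, r2, r3, r4, r6, r7, r8]
    rw [div_mul_eq_mul_div, div_mul_eq_mul_div, div_div,
      div_eq_div_iff (mul_ne_zero den3 e4') hΔ, hΔdef]
    ring
  have t4 : gg q (n+1) j
      = (A*(D*(1-q^4*v))*((v*q^4)*((1-u)*((v*q^4)*(1-q^2*u))))) / Δ := by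
    simp only [gg, t1, r7, ← hudef]
    rw [div_mul_eq_mul_div, div_mul_eq_mul_div, div_div,
      div_eq_div_iff (mul_ne_zero hΔ e4') hΔ, hΔdef]
    ring
  rw [t1, t2, t3, t4, div_sub_div_same, div_sub_div_same]
  congr 1
  ring

lemma bb_top (q : ℂ) (hq0 : q ≠ 0) (h1 : ∀ m : ℕ, (1:ℂ) - q^(m+1) ≠ 0) (n : ℕ) :
    bb q n (n+1) = (q ^ ((n+1)*(2*n+3)))⁻¹ := by
  have hC := hqp1 q h1 (n+1)
  have hD := hqp2 q h1 (n+1)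
  simp only [bb]
  rw [show (n+1)*(2*(n+1)+1) = (n+1)*(2*n+3) from by ring]
  field_simp

lemma gg_top (q : ℂ) (hq0 : q ≠ 0) (h1 : ∀ m : ℕ, (1:ℂ) - q^(m+1) ≠ 0) (n : ℕ) :
    gg q (n+1) (n+2) = (q ^ ((n+2)*(2*n+3)))⁻¹ := by
  have hC := hqp1 q h1 (n+2)
  have hD := hqp2 q h1 (n+2)
  have e4' : (1:ℂ) - q^(2*(n+1)+2) ≠ 0 := by
    rw [show 2*(n+1)+2 = 2*n+3+1 from by ring]; exact h1 (2*n+3)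
  simp only [gg]
  rw [show n+2 = (n+1)+1 from by omega]
  rw [bb_top q hq0 h1 (n+1)]
  rw [show 2*((n+1)+1) = 2*(n+1)+2 from by ring]
  rw [mul_div_assoc, div_self e4', mul_one]
  rw [show ((n+1)+1)*(2*(n+1)+3) = ((n+1)+1)*(2*n+3) + (2*(n+1)+2) from by ring, pow_add,
    mul_inv, mul_assoc, inv_mul_cancel₀ (pow_ne_zero _ hq0), mul_one]

lemma gg_bot (q : ℂ) (n : ℕ) : gg q (n+1) 0 = 0 := by
  simp [gg]

lemma key (q : ℂ) (hq0 : q ≠ 0) (h1 : ∀ m : ℕ, (1:ℂ) - q^(m+1) ≠ 0) (n : ℕ) :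
    ∑ j ∈ Finset.range (n+1), bb q n j
      = ∑ j ∈ Finset.Icc (-(n:ℤ)-1) (n:ℤ), q ^ (-(j*(2*j+1))) := by
  induction n with
  | zero =>
    have hq1 : (1:ℂ) - q ≠ 0 := by simpa using h1 0
    have hIcc : Finset.Icc (-((0:ℕ):ℤ)-1) ((0:ℕ):ℤ) = {-1, 0} := by
      ext a; simp [Finset.mem_Icc]; omega
    rw [hIcc, Finset.sum_range_one]
    rw [Finset.sum_insert (by simp), Finset.sum_singleton]
    norm_num [bb, qp]
    field_simp
    ring
  | succ n ih =>
    have tel : ∑ j ∈ Finset.range (n+2), (gg q (n+1) (j+1) - gg q (n+1) j)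
        = gg q (n+1) (n+2) - gg q (n+1) 0 := Finset.sum_range_sub (gg q (n+1)) (n+2)
    have step : ∑ j ∈ Finset.range (n+2), bb q (n+1) j
        = ∑ j ∈ Finset.range (n+2), bb q n j + (q ^ ((n+2)*(2*n+3)))⁻¹ := by
      have : ∑ j ∈ Finset.range (n+2), bb q (n+1) j
          = ∑ j ∈ Finset.range (n+2), (bb q n j + (gg q (n+1) (j+1) - gg q (n+1) j)) := by
        refine Finset.sum_congr rfl fun j _ => ?_
        have := cert q hq0 h1 n j
        linear_combination this
      rw [this, Finset.sum_add_distrib, tel, gg_bot, gg_top q hq0 h1 n, sub_zero]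
    have split : ∑ j ∈ Finset.range (n+2), bb q n j
        = ∑ j ∈ Finset.range (n+1), bb q n j + (q ^ ((n+1)*(2*n+3)))⁻¹ := by
      rw [Finset.sum_range_succ, bb_top q hq0 h1 n]
    have hIcc : Finset.Icc (-((n:ℤ)+1)-1) ((n:ℤ)+1)
        = insert (-(n:ℤ)-2) (insert ((n:ℤ)+1) (Finset.Icc (-(n:ℤ)-1) (n:ℤ))) := by
      ext a; simp [Finset.mem_Icc, Finset.mem_insert]; omega
    have z1 : (q : ℂ) ^ (-((-(n:ℤ)-2)*(2*(-(n:ℤ)-2)+1))) = (q ^ ((n+2)*(2*n+3)))⁻¹ := by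
      rw [show -((-(n:ℤ)-2)*(2*(-(n:ℤ)-2)+1)) = -(((n+2)*(2*n+3) : ℕ) : ℤ) from by
        push_cast; ring, zpow_neg, zpow_natCast]
    have z2 : (q : ℂ) ^ (-((((n:ℤ)+1))*(2*((n:ℤ)+1)+1))) = (q ^ ((n+1)*(2*n+3)))⁻¹ := by
      rw [show -((((n:ℤ)+1))*(2*((n:ℤ)+1)+1)) = -(((n+1)*(2*n+3) : ℕ) : ℤ) from by
        push_cast; ring, zpow_neg, zpow_natCast]
    rw [step, split, ih]
    rw [show (-(((n:ℕ)+1:ℕ):ℤ)-1) = -((n:ℤ)+1)-1 from by push_cast; ring,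
      show (((n:ℕ)+1:ℕ):ℤ) = (n:ℤ)+1 from by push_cast; ring, hIcc]
    rw [Finset.sum_insert (by simp [Finset.mem_Icc]; try omega),
      Finset.sum_insert (by simp [Finset.mem_Icc]; try omega), z1, z2]
    ring

/-- `Σ_{j=0}^n (q;q²)_j q^{-(n+1)(2j+1)}/(q²;q²)_j
      = (q;q²)_{n+1}/(q²;q²)_{n+1} · Σ_{j=-n-1}^n q^{-j(2j+1)}`,
    as an identity of rational functions (stated for all `q` with `0 < |q| < 1`). -/
theorem stmt10 (n : ℕ) (q : ℂ) (hq : ‖q‖ < 1) (hq0 : q ≠ 0) :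
    ∑ j ∈ Finset.range (n + 1),
        qp q (q ^ 2) j * q ^ (-(((n : ℤ) + 1) * (2 * j + 1))) / qp (q ^ 2) (q ^ 2) j =
      qp q (q ^ 2) (n + 1) / qp (q ^ 2) (q ^ 2) (n + 1) *
        ∑ j ∈ Finset.Icc (-(n : ℤ) - 1) (n : ℤ), q ^ (-(j * (2 * j + 1))) := by
  have h1 : ∀ m : ℕ, (1:ℂ) - q^(m+1) ≠ 0 := by
    intro m h
    have h2 : q^(m+1) = 1 := by
      have := sub_eq_zero.mp h; exact this.symm
    have h3 : ‖q^(m+1)‖ < 1 := by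
      rw [norm_pow]
      exact pow_lt_one₀ (norm_nonneg q) hq (Nat.succ_ne_zero m)
    rw [h2, norm_one] at h3
    exact lt_irrefl 1 h3
  have hkey := key q hq0 h1 n
  have hC := hqp1 q h1 (n+1)
  have hD := hqp2 q h1 (n+1)
  calc ∑ j ∈ Finset.range (n + 1),
        qp q (q ^ 2) j * q ^ (-(((n : ℤ) + 1) * (2 * j + 1))) / qp (q ^ 2) (q ^ 2) j
      = ∑ j ∈ Finset.range (n+1),
          (qp q (q^2) (n+1) / qp (q^2) (q^2) (n+1)) * bb q n j := by
        refine Finset.sum_congr rfl fun j _ => ?_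
        have hzp : q ^ (-(((n:ℤ)+1)*(2*(j:ℤ)+1))) = (q ^ ((n+1)*(2*j+1)))⁻¹ := by
          rw [show -(((n:ℤ)+1)*(2*(j:ℤ)+1)) = -((((n+1)*(2*j+1) : ℕ)) : ℤ) from by
            push_cast; ring, zpow_neg, zpow_natCast]
        have hA := hqp1 q h1 j
        have hB := hqp2 q h1 j
        have hX : q^((n+1)*(2*j+1)) ≠ 0 := pow_ne_zero _ hq0
        rw [hzp]
        simp only [bb]
        field_simp
    _ = (qp q (q^2) (n+1) / qp (q^2) (q^2) (n+1)) * ∑ j ∈ Finset.range (n+1), bb q n j := by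
        rw [Finset.mul_sum]
    _ = qp q (q ^ 2) (n + 1) / qp (q ^ 2) (q ^ 2) (n + 1) *
        ∑ j ∈ Finset.Icc (-(n : ℤ) - 1) (n : ℤ), q ^ (-(j * (2 * j + 1))) := by
        rw [hkey]
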